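/- arXiv:1108.2169 — 7 statements merged into one kernel-verified Lean document; each statement's English description precedes it below -/
import Mathlib

section
/- A Borel probability measure μ on ℝ^N is a probabilistic frame (i.e., there exist 0 < A ≤ B < ∞ with A‖x‖² ≤ ∫ ⟨x,y⟩² dμ(y) ≤ B‖x‖² for all x) if and only if μ has finite second moment and the linear span of its support is all of ℝ^N. -/
open MeasureTheory
open scoped RealInnerProductSpace ENNReal

/-- The support of a measure: points all of whose open neighborhoods have
positive measure. -/
def measSupport {N : ℕ} (μ : Measure (EuclideanSpace ℝ (Fin N))) :
    Set (EuclideanSpace ℝ (Fin N)) :=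
  {x | ∀ U : Set (EuclideanSpace ℝ (Fin N)), IsOpen U → x ∈ U → 0 < μ U}

private lemma mem_orth_span {N : ℕ} (S : Set (EuclideanSpace ℝ (Fin N)))
    (x : EuclideanSpace ℝ (Fin N)) (h : ∀ y ∈ S, ⟪y, x⟫ = 0) :
    x ∈ (Submodule.span ℝ S)ᗮ := by
  rw [Submodule.mem_orthogonal]
  intro u hu
  induction hu using Submodule.span_induction with
  | mem y hy => exact h y hy
  | zero => simp
  | add a b _ _ ha hb => rw [inner_add_left, ha, hb, add_zero]
  | smul c a _ ha => rw [real_inner_smul_left, ha, mul_zero]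

private lemma inner_sq_le {N : ℕ} (x y : EuclideanSpace ℝ (Fin N)) :
    ⟪x, y⟫ ^ 2 ≤ ‖x‖ ^ 2 * ‖y‖ ^ 2 := by
  calc ⟪x, y⟫ ^ 2 ≤ (‖x‖ * ‖y‖) ^ 2 := by
        rw [← sq_abs]
        exact pow_le_pow_left₀ (abs_nonneg _) (abs_real_inner_le_norm x y) 2
    _ = ‖x‖ ^ 2 * ‖y‖ ^ 2 := by ring

theorem stmt0 {N : ℕ} (μ : Measure (EuclideanSpace ℝ (Fin N)))
    [IsProbabilityMeasure μ] :
    (∃ A B : ℝ, 0 < A ∧ A ≤ B ∧ ∀ x : EuclideanSpace ℝ (Fin N),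
        A * ‖x‖ ^ 2 ≤ ∫ y, ⟪x, y⟫ ^ 2 ∂μ ∧ ∫ y, ⟪x, y⟫ ^ 2 ∂μ ≤ B * ‖x‖ ^ 2) ↔
    (Integrable (fun y : EuclideanSpace ℝ (Fin N) => ‖y‖ ^ 2) μ ∧
      Submodule.span ℝ (measSupport μ) = ⊤) := by
  set E := EuclideanSpace ℝ (Fin N)
  constructor
  · rintro ⟨A, B, hA, hAB, hfr⟩
    have hint : ∀ x : E, x ≠ 0 → Integrable (fun y => ⟪x, y⟫ ^ 2) μ := by
      intro x hx
      by_contra h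
      have h0 := integral_undef h
      have h1 := (hfr x).1
      rw [h0] at h1
      have hx2 : 0 < ‖x‖ ^ 2 := by
        have := norm_pos_iff.mpr hx
        positivity
      nlinarith
    constructor
    · have hI : Integrable
          (fun y : E => ∑ i, ⟪EuclideanSpace.single i (1:ℝ), y⟫ ^ 2) μ := by
        apply integrable_finset_sum
        intro i _
        apply hint
        intro h
        have : ‖EuclideanSpace.single i (1:ℝ)‖ = 0 := by rw [h, norm_zero]
        rw [EuclideanSpace.norm_single] at this
        norm_num at this
      refine hI.congr (Filter.Eventually.of_forall fun y => ?_)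
      show ∑ i, ⟪EuclideanSpace.single i (1:ℝ), y⟫ ^ 2 = ‖y‖ ^ 2
      rw [← real_inner_self_eq_norm_sq, PiLp.inner_apply]
      simp [EuclideanSpace.inner_single_left, pow_two]
    · by_contra hspan
      have hne : (Submodule.span ℝ (measSupport μ))ᗮ ≠ ⊥ := by
        rwa [ne_eq, Submodule.orthogonal_eq_bot_iff]
      obtain ⟨x, hxmem, hx0⟩ := Submodule.ne_bot_iff _ |>.mp hne
      have hz : ∀ y ∈ measSupport μ, ⟪x, y⟫ = 0 := by
        intro y hy
        rw [real_inner_comm]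
        exact (Submodule.mem_orthogonal _ _).mp hxmem y (Submodule.subset_span hy)
      have hO : μ {y : E | ⟪x, y⟫ ≠ 0} = 0 := by
        apply measure_null_of_locally_null
        intro y hy
        have hyS : y ∉ measSupport μ := fun hS => hy (hz y hS)
        simp only [measSupport, Set.mem_setOf_eq, not_forall] at hyS
        obtain ⟨U, hUopen, hyU, hU0⟩ := hyS
        refine ⟨U, mem_nhdsWithin_of_mem_nhds (hUopen.mem_nhds hyU), ?_⟩
        simpa using hU0
      have hae : (fun y : E => ⟪x, y⟫ ^ 2) =ᵐ[μ] 0 := by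
        rw [Filter.EventuallyEq, ae_iff]
        refine measure_mono_null (fun y hy => ?_) hO
        simp only [Set.mem_setOf_eq, Pi.zero_apply] at hy ⊢
        intro h; exact hy (by rw [h]; ring)
      have h0 : ∫ y, ⟪x, y⟫ ^ 2 ∂μ = 0 := integral_eq_zero_of_ae hae
      have h1 := (hfr x).1
      rw [h0] at h1
      have hx2 : 0 < ‖x‖ ^ 2 := by
        have := norm_pos_iff.mpr hx0
        positivity
      nlinarith
  · rintro ⟨h2, hspan⟩
    have hcont : ∀ x : E, Continuous fun y : E => ⟪x, y⟫ ^ 2 := fun x =>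
      (continuous_const.inner continuous_id).pow 2
    have hint : ∀ x : E, Integrable (fun y => ⟪x, y⟫ ^ 2) μ := by
      intro x
      refine (h2.const_mul (‖x‖ ^ 2)).mono' (hcont x).aestronglyMeasurable
        (Filter.Eventually.of_forall fun y => ?_)
      rw [Real.norm_eq_abs, abs_of_nonneg (sq_nonneg _)]
      exact inner_sq_le x y
    have hQpos : ∀ x : E, x ≠ 0 → 0 < ∫ y, ⟪x, y⟫ ^ 2 ∂μ := by
      intro x hx
      rcases (integral_nonneg (f := fun y => ⟪x, y⟫ ^ 2) fun y => sq_nonneg _).lt_or_eq with h | h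
      · exact h
      exfalso
      have hae := (integral_eq_zero_iff_of_nonneg (fun y => sq_nonneg _) (hint x)).1 h.symm
      have hO : μ {y : E | ⟪x, y⟫ ≠ 0} = 0 := by
        rw [Filter.EventuallyEq, ae_iff] at hae
        refine measure_mono_null (fun y hy => ?_) hae
        simp only [Set.mem_setOf_eq, Pi.zero_apply] at hy ⊢
        exact fun h' => hy (pow_eq_zero_iff two_ne_zero |>.mp h')
      have hsub : ∀ y ∈ measSupport μ, ⟪y, x⟫ = 0 := by
        intro y hyS
        by_contra hne
        have hop : IsOpen {z : E | ⟪x, z⟫ ≠ 0} := by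
          have : Continuous fun z : E => ⟪x, z⟫ := continuous_const.inner continuous_id
          exact isOpen_compl_singleton.preimage this
        have hpos := hyS _ hop (by rw [real_inner_comm] at hne; exact hne)
        rw [hO] at hpos
        exact lt_irrefl 0 hpos
      have hmem := mem_orth_span _ _ hsub
      rw [hspan, Submodule.top_orthogonal_eq_bot, Submodule.mem_bot] at hmem
      exact hx hmem
    have hub : ∀ x : E, ∫ y, ⟪x, y⟫ ^ 2 ∂μ ≤ (∫ y, ‖y‖ ^ 2 ∂μ) * ‖x‖ ^ 2 := by
      intro x
      calc ∫ y, ⟪x, y⟫ ^ 2 ∂μ ≤ ∫ y, ‖x‖ ^ 2 * ‖y‖ ^ 2 ∂μ :=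
            integral_mono (hint x) (h2.const_mul _) fun y => inner_sq_le x y
        _ = ‖x‖ ^ 2 * ∫ y, ‖y‖ ^ 2 ∂μ := integral_const_mul _ _
        _ = (∫ y, ‖y‖ ^ 2 ∂μ) * ‖x‖ ^ 2 := mul_comm _ _
    have hhom : ∀ (c : ℝ) (x : E),
        ∫ y, ⟪c • x, y⟫ ^ 2 ∂μ = c ^ 2 * ∫ y, ⟪x, y⟫ ^ 2 ∂μ := by
      intro c x
      rw [← integral_const_mul]
      congr 1
      funext y
      rw [real_inner_smul_left]
      ring
    by_cases hN : ∀ x : E, x = 0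
    · refine ⟨1, 1, one_pos, le_refl _, fun x => ?_⟩
      rw [hN x]
      simp
    · push_neg at hN
      obtain ⟨x₀, hx₀⟩ := hN
      have hsne : (Metric.sphere (0 : E) 1).Nonempty := by
        refine ⟨‖x₀‖⁻¹ • x₀, ?_⟩
        rw [mem_sphere_zero_iff_norm, norm_smul, norm_inv, norm_norm,
          inv_mul_cancel₀ (norm_ne_zero_iff.mpr hx₀)]
      have hQcont : Continuous fun x : E => ∫ y, ⟪x, y⟫ ^ 2 ∂μ := by
        rw [continuous_iff_continuousAt]
        intro x₁
        apply continuousAt_of_dominated (bound := fun y : E => (‖x₁‖ + 1) ^ 2 * ‖y‖ ^ 2)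
        · exact Filter.Eventually.of_forall fun x => (hcont x).aestronglyMeasurable
        · filter_upwards [Metric.ball_mem_nhds x₁ one_pos] with x hx
          refine Filter.Eventually.of_forall fun y => ?_
          rw [Real.norm_eq_abs, abs_of_nonneg (sq_nonneg _)]
          have hxn : ‖x‖ ≤ ‖x₁‖ + 1 := by
            have h1 : dist x x₁ < 1 := Metric.mem_ball.mp hx
            have h2 : |‖x‖ - ‖x₁‖| ≤ ‖x - x₁‖ := abs_norm_sub_norm_le x x₁
            rw [← dist_eq_norm] at h2
            have := abs_le.mp h2
            linarith [this.2]
          calc ⟪x, y⟫ ^ 2 ≤ ‖x‖ ^ 2 * ‖y‖ ^ 2 := inner_sq_le x y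
            _ ≤ (‖x₁‖ + 1) ^ 2 * ‖y‖ ^ 2 := by
                have h0 : (0:ℝ) ≤ ‖x₁‖ + 1 := by positivity
                have : ‖x‖ ^ 2 ≤ (‖x₁‖ + 1) ^ 2 :=
                  pow_le_pow_left₀ (norm_nonneg _) hxn 2
                exact mul_le_mul_of_nonneg_right this (sq_nonneg _)
        · exact h2.const_mul _
        · refine Filter.Eventually.of_forall fun y => ?_
          exact ((continuous_id.inner continuous_const).pow 2).continuousAt
      obtain ⟨xm, hxm, hmin⟩ :=
        (isCompact_sphere (0 : E) 1).exists_isMinOn hsne hQcont.continuousOn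
      rw [isMinOn_iff] at hmin
      have hxm0 : xm ≠ 0 := by
        intro h
        rw [mem_sphere_zero_iff_norm, h, norm_zero] at hxm
        norm_num at hxm
      have hApos : 0 < ∫ y, ⟪xm, y⟫ ^ 2 ∂μ := hQpos xm hxm0
      set A := ∫ y, ⟪xm, y⟫ ^ 2 ∂μ with hAdef
      set M := ∫ y, ‖y‖ ^ 2 ∂μ with hMdef
      refine ⟨A, max A M, hApos, le_max_left _ _, fun x => ?_⟩
      constructor
      · by_cases hx : x = 0
        · simp [hx]
        · have hxn : ‖x‖ ≠ 0 := norm_ne_zero_iff.mpr hx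
          have hu : ‖x‖⁻¹ • x ∈ Metric.sphere (0 : E) 1 := by
            rw [mem_sphere_zero_iff_norm, norm_smul, norm_inv, norm_norm,
              inv_mul_cancel₀ hxn]
          have hle := hmin _ hu
          have hx' : x = ‖x‖ • (‖x‖⁻¹ • x) := by
            rw [smul_smul, mul_inv_cancel₀ hxn, one_smul]
          calc A * ‖x‖ ^ 2 ≤ (∫ y, ⟪‖x‖⁻¹ • x, y⟫ ^ 2 ∂μ) * ‖x‖ ^ 2 :=
                mul_le_mul_of_nonneg_right hle (sq_nonneg _)
            _ = ∫ y, ⟪x, y⟫ ^ 2 ∂μ := by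
                rw [hhom (‖x‖⁻¹) x]
                have hc : ‖x‖ ^ 2 * ‖x‖⁻¹ ^ 2 = 1 := by
                  rw [← mul_pow, mul_inv_cancel₀ hxn, one_pow]
                rw [mul_comm, ← mul_assoc, hc, one_mul]
      · calc ∫ y, ⟪x, y⟫ ^ 2 ∂μ ≤ M * ‖x‖ ^ 2 := hub x
          _ ≤ max A M * ‖x‖ ^ 2 :=
            mul_le_mul_of_nonneg_right (le_max_right _ _) (sq_nonneg _)
end

section
/- Let μ be a probabilistic frame on ℝ^{N₁} with bounds A_μ, B_μ and ν a probabilistic frame on ℝ^{N₂} with bounds A_ν, B_ν, and suppose at least one of μ, ν has zero mean. Then the product measure μ ⊗ ν is a probabilistic frame on ℝ^{N₁} × ℝ^{N₂} with lower bound min(A_μ, A_ν) and upper bound max(B_μ, B_ν). -/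
open MeasureTheory
open scoped RealInnerProductSpace

lemma aux_sq_integrable {N : ℕ} (μ : Measure (EuclideanSpace ℝ (Fin N)))
    [IsProbabilityMeasure μ] (A : ℝ) (hA : 0 < A)
    (h : ∀ x : EuclideanSpace ℝ (Fin N), A * ‖x‖ ^ 2 ≤ ∫ y, ⟪x, y⟫ ^ 2 ∂μ)
    (x : EuclideanSpace ℝ (Fin N)) : Integrable (fun y => ⟪x, y⟫ ^ 2) μ := by
  by_cases hx : x = 0
  · simp [hx]
  · by_contra hni
    have h1 := h x
    rw [integral_undef hni] at h1
    have : 0 < ‖x‖ := norm_pos_iff.mpr hx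
    nlinarith [mul_pos hA (pow_pos this 2)]

lemma aux_inner_integrable {N : ℕ} (μ : Measure (EuclideanSpace ℝ (Fin N)))
    [IsProbabilityMeasure μ] (x : EuclideanSpace ℝ (Fin N))
    (hsq : Integrable (fun y => ⟪x, y⟫ ^ 2) μ) :
    Integrable (fun y => ⟪x, y⟫) μ := by
  refine Integrable.mono' ((hsq.add (integrable_const 1)).div_const 2)
    ((continuous_const.inner continuous_id).aestronglyMeasurable) ?_
  filter_upwards with y
  rw [Real.norm_eq_abs]
  simp only [Pi.add_apply]
  nlinarith [sq_nonneg (|⟪x, y⟫| - 1), sq_abs ⟪x, y⟫]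

lemma aux_id_integrable {N : ℕ} (μ : Measure (EuclideanSpace ℝ (Fin N)))
    [IsProbabilityMeasure μ]
    (hsq : ∀ x : EuclideanSpace ℝ (Fin N), Integrable (fun y => ⟪x, y⟫ ^ 2) μ) :
    Integrable (fun y : EuclideanSpace ℝ (Fin N) => y) μ := by
  have hnorm : Integrable (fun y : EuclideanSpace ℝ (Fin N) => ‖y‖ ^ 2) μ := by
    have : ∀ y : EuclideanSpace ℝ (Fin N),
        ‖y‖ ^ 2 = ∑ i : Fin N, ⟪EuclideanSpace.single i (1:ℝ), y⟫ ^ 2 := by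
      intro y
      rw [EuclideanSpace.norm_eq, Real.sq_sqrt (by positivity)]
      congr 1
      ext i
      rw [EuclideanSpace.inner_single_left]
      simp [sq_abs]
    simp_rw [this]
    exact integrable_finset_sum _ (fun i _ => hsq _)
  have hmem : MemLp (fun y : EuclideanSpace ℝ (Fin N) => y) 2 μ :=
    (memLp_two_iff_integrable_sq_norm aestronglyMeasurable_id).mpr hnorm
  exact hmem.integrable one_le_two

theorem stmt9 {N₁ N₂ : ℕ}
    (μ : Measure (EuclideanSpace ℝ (Fin N₁)))
    (ν : Measure (EuclideanSpace ℝ (Fin N₂)))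
    [IsProbabilityMeasure μ] [IsProbabilityMeasure ν]
    (Aμ Bμ Aν Bν : ℝ) (hAμ : 0 < Aμ) (hAν : 0 < Aν)
    (hμ : ∀ x : EuclideanSpace ℝ (Fin N₁),
      Aμ * ‖x‖ ^ 2 ≤ ∫ y, ⟪x, y⟫ ^ 2 ∂μ ∧ ∫ y, ⟪x, y⟫ ^ 2 ∂μ ≤ Bμ * ‖x‖ ^ 2)
    (hν : ∀ x : EuclideanSpace ℝ (Fin N₂),
      Aν * ‖x‖ ^ 2 ≤ ∫ y, ⟪x, y⟫ ^ 2 ∂ν ∧ ∫ y, ⟪x, y⟫ ^ 2 ∂ν ≤ Bν * ‖x‖ ^ 2)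
    (hmean : (∫ y, y ∂μ) = 0 ∨ (∫ y, y ∂ν) = 0) :
    ∀ z : EuclideanSpace ℝ (Fin N₁) × EuclideanSpace ℝ (Fin N₂),
      min Aμ Aν * (‖z.1‖ ^ 2 + ‖z.2‖ ^ 2) ≤
        ∫ p, (⟪z.1, p.1⟫ + ⟪z.2, p.2⟫) ^ 2 ∂(μ.prod ν) ∧
      ∫ p, (⟪z.1, p.1⟫ + ⟪z.2, p.2⟫) ^ 2 ∂(μ.prod ν) ≤
        max Bμ Bν * (‖z.1‖ ^ 2 + ‖z.2‖ ^ 2) := by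
  intro z
  obtain ⟨z₁, z₂⟩ := z
  have hsqμ := aux_sq_integrable μ Aμ hAμ (fun x => (hμ x).1)
  have hsqν := aux_sq_integrable ν Aν hAν (fun x => (hν x).1)
  have hinμ : ∀ x, Integrable (fun y => ⟪x, y⟫) μ :=
    fun x => aux_inner_integrable μ x (hsqμ x)
  have hinν : ∀ x, Integrable (fun y => ⟪x, y⟫) ν :=
    fun x => aux_inner_integrable ν x (hsqν x)
  -- cross term is zero
  have hcross : (∫ y, ⟪z₁, y⟫ ∂μ) * (∫ y, ⟪z₂, y⟫ ∂ν) = 0 := by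
    rcases hmean with hm | hm
    · have := integral_inner (𝕜 := ℝ) (aux_id_integrable μ hsqμ) z₁
      simp only [hm, inner_zero_right] at this
      rw [this, zero_mul]
    · have := integral_inner (𝕜 := ℝ) (aux_id_integrable ν hsqν) z₂
      simp only [hm, inner_zero_right] at this
      rw [this, mul_zero]
  -- expand the integral
  have hI1 : Integrable (fun p : EuclideanSpace ℝ (Fin N₁) × EuclideanSpace ℝ (Fin N₂) =>
      ⟪z₁, p.1⟫ ^ 2 * 1) (μ.prod ν) := (hsqμ z₁).mul_prod (integrable_const 1)
  have hI2 : Integrable (fun p : EuclideanSpace ℝ (Fin N₁) × EuclideanSpace ℝ (Fin N₂) =>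
      (2 * ⟪z₁, p.1⟫) * ⟪z₂, p.2⟫) (μ.prod ν) := ((hinμ z₁).const_mul 2).mul_prod (hinν z₂)
  have hI3 : Integrable (fun p : EuclideanSpace ℝ (Fin N₁) × EuclideanSpace ℝ (Fin N₂) =>
      (1:ℝ) * ⟪z₂, p.2⟫ ^ 2) (μ.prod ν) := (integrable_const 1).mul_prod (hsqν z₂)
  have hexp : (∫ p, (⟪z₁, p.1⟫ + ⟪z₂, p.2⟫) ^ 2 ∂(μ.prod ν)) =
      (∫ y, ⟪z₁, y⟫ ^ 2 ∂μ) + (∫ y, ⟪z₂, y⟫ ^ 2 ∂ν) := by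
    have heq : ∀ p : EuclideanSpace ℝ (Fin N₁) × EuclideanSpace ℝ (Fin N₂),
        (⟪z₁, p.1⟫ + ⟪z₂, p.2⟫) ^ 2 =
          ⟪z₁, p.1⟫ ^ 2 * 1 + ((2 * ⟪z₁, p.1⟫) * ⟪z₂, p.2⟫ + (1:ℝ) * ⟪z₂, p.2⟫ ^ 2) := by
      intro p; ring
    have hI23 : Integrable (fun p : EuclideanSpace ℝ (Fin N₁) × EuclideanSpace ℝ (Fin N₂) =>
        (2 * ⟪z₁, p.1⟫) * ⟪z₂, p.2⟫ + (1:ℝ) * ⟪z₂, p.2⟫ ^ 2) (μ.prod ν) := hI2.add hI3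
    simp_rw [heq]
    rw [integral_add hI1 hI23, integral_add hI2 hI3,
      integral_prod_mul (fun y => ⟪z₁, y⟫ ^ 2) (fun _ => (1:ℝ)),
      integral_prod_mul (fun y => 2 * ⟪z₁, y⟫) (fun y => ⟪z₂, y⟫),
      integral_prod_mul (fun _ => (1:ℝ)) (fun y => ⟪z₂, y⟫ ^ 2),
      integral_const_mul]
    simp only [integral_const, measure_univ, probReal_univ, ENNReal.toReal_one, smul_eq_mul, mul_one, one_mul]
    linear_combination 2 * hcross
  rw [hexp]
  have h1 := hμ z₁
  have h2 := hν z₂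
  have hn1 : (0:ℝ) ≤ ‖z₁‖ ^ 2 := by positivity
  have hn2 : (0:ℝ) ≤ ‖z₂‖ ^ 2 := by positivity
  constructor
  · have a1 : min Aμ Aν * ‖z₁‖ ^ 2 ≤ Aμ * ‖z₁‖ ^ 2 :=
      mul_le_mul_of_nonneg_right (min_le_left _ _) hn1
    have a2 : min Aμ Aν * ‖z₂‖ ^ 2 ≤ Aν * ‖z₂‖ ^ 2 :=
      mul_le_mul_of_nonneg_right (min_le_right _ _) hn2
    nlinarith [h1.1, h2.1]
  · have a1 : Bμ * ‖z₁‖ ^ 2 ≤ max Bμ Bν * ‖z₁‖ ^ 2 :=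
      mul_le_mul_of_nonneg_right (le_max_left _ _) hn1
    have a2 : Bν * ‖z₂‖ ^ 2 ≤ max Bμ Bν * ‖z₂‖ ^ 2 :=
      mul_le_mul_of_nonneg_right (le_max_right _ _) hn2
    nlinarith [h1.2, h2.2]
end

section
/- If μ and ν are tight probabilistic frames on ℝ^{N₁} and ℝ^{N₂} respectively, at least one having zero mean, and M₂²(μ)/N₁ = M₂²(ν)/N₂, then the product measure μ ⊗ ν is a tight probabilistic frame on ℝ^{N₁} × ℝ^{N₂}. -/
open MeasureTheory
open scoped RealInnerProductSpace

section Aux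
variable {N : ℕ} (μ : Measure (EuclideanSpace ℝ (Fin N))) [IsProbabilityMeasure μ]
variable {A : ℝ}

lemma aux_meas (x : EuclideanSpace ℝ (Fin N)) :
    AEStronglyMeasurable (fun y : EuclideanSpace ℝ (Fin N) => ⟪x, y⟫) μ :=
  (continuous_const.inner continuous_id).aestronglyMeasurable

lemma aux_int_sq (hA : 0 < A)
    (hμ : ∀ x : EuclideanSpace ℝ (Fin N), ∫ y, ⟪x, y⟫ ^ 2 ∂μ = A * ‖x‖ ^ 2)
    (x : EuclideanSpace ℝ (Fin N)) :
    Integrable (fun y => ⟪x, y⟫ ^ 2) μ := by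
  by_cases hx : x = 0
  · simp [hx]
  · by_contra h
    have := hμ x
    rw [integral_undef h] at this
    have hxn : ‖x‖ ≠ 0 := norm_ne_zero_iff.2 hx
    have : A * ‖x‖ ^ 2 > 0 := by positivity
    linarith

lemma aux_int (hA : 0 < A)
    (hμ : ∀ x : EuclideanSpace ℝ (Fin N), ∫ y, ⟪x, y⟫ ^ 2 ∂μ = A * ‖x‖ ^ 2)
    (x : EuclideanSpace ℝ (Fin N)) :
    Integrable (fun y => ⟪x, y⟫) μ :=
  ((memLp_two_iff_integrable_sq (aux_meas μ x)).2 (aux_int_sq μ hA hμ x)).integrable one_le_two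

lemma aux_int_id (hA : 0 < A)
    (hμ : ∀ x : EuclideanSpace ℝ (Fin N), ∫ y, ⟪x, y⟫ ^ 2 ∂μ = A * ‖x‖ ^ 2) :
    Integrable (fun y : EuclideanSpace ℝ (Fin N) => y) μ := by
  have hsq : Integrable (fun y : EuclideanSpace ℝ (Fin N) => ‖y‖ ^ 2) μ := by
    have : (fun y : EuclideanSpace ℝ (Fin N) => ‖y‖ ^ 2) =
        fun y => ∑ i : Fin N, ⟪EuclideanSpace.single i (1:ℝ), y⟫ ^ 2 := by
      funext y
      simp [EuclideanSpace.inner_single_left, EuclideanSpace.norm_eq,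
        Real.sq_sqrt (Finset.sum_nonneg fun i _ => sq_nonneg _), sq_abs]
    rw [this]
    exact integrable_finset_sum _ fun i _ => aux_int_sq μ hA hμ _
  exact ((memLp_two_iff_integrable_sq_norm
    aestronglyMeasurable_id).2 hsq).integrable one_le_two

lemma aux_mom (hA : 0 < A)
    (hμ : ∀ x : EuclideanSpace ℝ (Fin N), ∫ y, ⟪x, y⟫ ^ 2 ∂μ = A * ‖x‖ ^ 2) :
    ∫ y, ‖y‖ ^ 2 ∂μ = N * A := by
  have : (fun y : EuclideanSpace ℝ (Fin N) => ‖y‖ ^ 2) =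
      fun y => ∑ i : Fin N, ⟪EuclideanSpace.single i (1:ℝ), y⟫ ^ 2 := by
    funext y
    simp [EuclideanSpace.inner_single_left, EuclideanSpace.norm_eq,
      Real.sq_sqrt (Finset.sum_nonneg fun i _ => sq_nonneg _), sq_abs]
  rw [this, integral_finset_sum _ fun i _ => aux_int_sq μ hA hμ _]
  simp only [hμ, EuclideanSpace.norm_single, norm_one, one_pow, mul_one,
    Finset.sum_const, Finset.card_univ, Fintype.card_fin, nsmul_eq_mul]

end Aux


theorem stmt10 {N₁ N₂ : ℕ}
    (μ : Measure (EuclideanSpace ℝ (Fin N₁)))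
    (ν : Measure (EuclideanSpace ℝ (Fin N₂)))
    [IsProbabilityMeasure μ] [IsProbabilityMeasure ν]
    (Aμ Aν : ℝ) (hAμ : 0 < Aμ) (hAν : 0 < Aν)
    (hμ : ∀ x : EuclideanSpace ℝ (Fin N₁), ∫ y, ⟪x, y⟫ ^ 2 ∂μ = Aμ * ‖x‖ ^ 2)
    (hν : ∀ x : EuclideanSpace ℝ (Fin N₂), ∫ y, ⟪x, y⟫ ^ 2 ∂ν = Aν * ‖x‖ ^ 2)
    (hmean : (∫ y, y ∂μ) = 0 ∨ (∫ y, y ∂ν) = 0)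
    (hmom : (∫ y, ‖y‖ ^ 2 ∂μ) / N₁ = (∫ y, ‖y‖ ^ 2 ∂ν) / N₂) :
    ∃ A : ℝ, 0 < A ∧
      ∀ z : EuclideanSpace ℝ (Fin N₁) × EuclideanSpace ℝ (Fin N₂),
        ∫ p, (⟪z.1, p.1⟫ + ⟪z.2, p.2⟫) ^ 2 ∂(μ.prod ν) =
          A * (‖z.1‖ ^ 2 + ‖z.2‖ ^ 2) := by
  rcases Nat.eq_zero_or_pos N₁ with h1 | h1
  · subst h1
    refine ⟨Aν, hAν, fun z => ?_⟩
    have hz : z.1 = 0 := Subsingleton.elim _ _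
    rw [hz]
    simp only [inner_zero_left, zero_add, norm_zero, ne_eq, OfNat.ofNat_ne_zero,
      not_false_eq_true, zero_pow]
    rw [MeasureTheory.integral_fun_snd (f := fun q => ⟪z.2, q⟫ ^ 2)]
    simp only [measure_univ, probReal_univ, ENNReal.toReal_one, one_smul, hν z.2, zero_add]
  rcases Nat.eq_zero_or_pos N₂ with h2 | h2
  · subst h2
    refine ⟨Aμ, hAμ, fun z => ?_⟩
    have hz : z.2 = 0 := Subsingleton.elim _ _
    rw [hz]
    simp only [inner_zero_left, add_zero, norm_zero, ne_eq, OfNat.ofNat_ne_zero,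
      not_false_eq_true, zero_pow]
    rw [MeasureTheory.integral_fun_fst (f := fun q => ⟪z.1, q⟫ ^ 2)]
    simp only [measure_univ, probReal_univ, ENNReal.toReal_one, one_smul, hμ z.1, add_zero]
  -- both dimensions positive
  have hμm := aux_mom μ hAμ hμ
  have hνm := aux_mom ν hAν hν
  have hAeq : Aμ = Aν := by
    rw [hμm, hνm] at hmom
    have hN₁ : (N₁ : ℝ) ≠ 0 := Nat.cast_ne_zero.2 h1.ne'
    have hN₂ : (N₂ : ℝ) ≠ 0 := Nat.cast_ne_zero.2 h2.ne'
    rwa [mul_div_cancel_left₀ _ hN₁, mul_div_cancel_left₀ _ hN₂] at hmom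
  refine ⟨Aμ, hAμ, fun z => ?_⟩
  have Ia2 := aux_int_sq μ hAμ hμ z.1
  have Ib2 := aux_int_sq ν hAν hν z.2
  have Ia := aux_int μ hAμ hμ z.1
  have Ib := aux_int ν hAν hν z.2
  have Ifst : Integrable (fun p : EuclideanSpace ℝ (Fin N₁) × EuclideanSpace ℝ (Fin N₂) =>
      ⟪z.1, p.1⟫ ^ 2) (μ.prod ν) := by
    simpa using Ia2.mul_prod (integrable_const (1 : ℝ))
  have Isnd : Integrable (fun p : EuclideanSpace ℝ (Fin N₁) × EuclideanSpace ℝ (Fin N₂) =>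
      ⟪z.2, p.2⟫ ^ 2) (μ.prod ν) := by
    simpa using (integrable_const (1 : ℝ)).mul_prod Ib2
  have Iab : Integrable (fun p : EuclideanSpace ℝ (Fin N₁) × EuclideanSpace ℝ (Fin N₂) =>
      ⟪z.1, p.1⟫ * ⟪z.2, p.2⟫) (μ.prod ν) := Ia.mul_prod Ib
  have hexp : ∫ p, (⟪z.1, p.1⟫ + ⟪z.2, p.2⟫) ^ 2 ∂(μ.prod ν) =
      ∫ p, (⟪z.1, p.1⟫ ^ 2 + (2 * (⟪z.1, p.1⟫ * ⟪z.2, p.2⟫) + ⟪z.2, p.2⟫ ^ 2)) ∂(μ.prod ν) :=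
    integral_congr_ae (Filter.Eventually.of_forall fun p => by ring)
  have split1 := integral_add (μ := μ.prod ν) Ifst ((Iab.const_mul 2).add Isnd)
  have split2 := integral_add (μ := μ.prod ν) (Iab.const_mul 2) Isnd
  simp only [Pi.add_apply] at split1
  rw [hexp, split1, split2, MeasureTheory.integral_const_mul]
  have e1 : ∫ p, ⟪z.1, p.1⟫ ^ 2 ∂(μ.prod ν) = Aμ * ‖z.1‖ ^ 2 := by
    rw [MeasureTheory.integral_fun_fst (f := fun q => ⟪z.1, q⟫ ^ 2)]
    simp only [measure_univ, probReal_univ, ENNReal.toReal_one, one_smul, hμ z.1]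
  have e2 : ∫ p, ⟪z.2, p.2⟫ ^ 2 ∂(μ.prod ν) = Aν * ‖z.2‖ ^ 2 := by
    rw [MeasureTheory.integral_fun_snd (f := fun q => ⟪z.2, q⟫ ^ 2)]
    simp only [measure_univ, probReal_univ, ENNReal.toReal_one, one_smul, hν z.2]
  have e3 : ∫ p, ⟪z.1, p.1⟫ * ⟪z.2, p.2⟫ ∂(μ.prod ν) = 0 := by
    rw [MeasureTheory.integral_prod_mul (f := fun q => ⟪z.1, q⟫) (g := fun q => ⟪z.2, q⟫)]
    rcases hmean with h | h
    · have : ∫ y, ⟪z.1, y⟫ ∂μ = 0 := by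
        rw [integral_inner (aux_int_id μ hAμ hμ), h, inner_zero_right]
      rw [this, zero_mul]
    · have : ∫ y, ⟪z.2, y⟫ ∂ν = 0 := by
        rw [integral_inner (aux_int_id ν hAν hν), h, inner_zero_right]
      rw [this, mul_zero]
  rw [e1, e2, e3, hAeq]
  ring
end

section
/- For any probability measure μ on ℝ^N with finite second moment, the probabilistic frame potential PFP(μ) = ∬ ⟨x,y⟩² dμ(x) dμ(y) satisfies PFP(μ) ≥ (1/N) (∫ ‖x‖² dμ(x))², with equality (for μ ≠ δ_0) if and only if μ is a tight probabilistic frame. -/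
open MeasureTheory
open scoped RealInnerProductSpace

theorem stmt16 {N : ℕ} (hN : 0 < N) (μ : Measure (EuclideanSpace ℝ (Fin N)))
    [IsProbabilityMeasure μ]
    (hmom : Integrable (fun y : EuclideanSpace ℝ (Fin N) => ‖y‖ ^ 2) μ) :
    (1 / (N : ℝ)) * (∫ x, ‖x‖ ^ 2 ∂μ) ^ 2 ≤
      ∫ x, ∫ y, ⟪x, y⟫ ^ 2 ∂μ ∂μ ∧
    (μ ≠ Measure.dirac 0 →
      (∫ x, ∫ y, ⟪x, y⟫ ^ 2 ∂μ ∂μ = (1 / (N : ℝ)) * (∫ x, ‖x‖ ^ 2 ∂μ) ^ 2 ↔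
        ∃ A : ℝ, 0 < A ∧ ∀ x : EuclideanSpace ℝ (Fin N),
          ∫ y, ⟪x, y⟫ ^ 2 ∂μ = A * ‖x‖ ^ 2)) := by
  classical
  have hN0 : (0:ℝ) < N := by exact_mod_cast hN
  set m : Fin N → Fin N → ℝ := fun i j => ∫ y, y i * y j ∂μ with hm
  have habs : ∀ (i : Fin N) (y : EuclideanSpace ℝ (Fin N)), |y i| ≤ ‖y‖ := by
    intro i y
    calc |y i| = |⟪EuclideanSpace.single i (1:ℝ), y⟫| := by
          rw [EuclideanSpace.inner_single_left]; norm_num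
    _ ≤ ‖EuclideanSpace.single i (1:ℝ)‖ * ‖y‖ := abs_real_inner_le_norm _ _
    _ = ‖y‖ := by simp
  have hint : ∀ i j : Fin N, Integrable (fun y : EuclideanSpace ℝ (Fin N) => y i * y j) μ := by
    intro i j
    refine hmom.mono' ((by fun_prop : Continuous fun y : EuclideanSpace ℝ (Fin N) => y i * y j).aestronglyMeasurable) ?_
    filter_upwards with y
    rw [Real.norm_eq_abs, abs_mul]
    calc |y i| * |y j| ≤ ‖y‖ * ‖y‖ :=
          mul_le_mul (habs i y) (habs j y) (abs_nonneg _) (norm_nonneg _)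
    _ = ‖y‖ ^ 2 := (sq ‖y‖).symm
  have hnorm : ∀ x : EuclideanSpace ℝ (Fin N), ‖x‖ ^ 2 = ∑ i, x i * x i := by
    intro x
    rw [← real_inner_self_eq_norm_sq]
    simp only [PiLp.inner_apply, RCLike.inner_apply, conj_trivial]
  -- trace
  have hT : ∫ x, ‖x‖ ^ 2 ∂μ = ∑ i, m i i := by
    simp_rw [hnorm]
    exact integral_finset_sum _ (fun i _ => hint i i)
  -- inner expansion
  have hexp : ∀ x y : EuclideanSpace ℝ (Fin N),
      ⟪x, y⟫ ^ 2 = ∑ p : Fin N × Fin N, (x p.1 * x p.2) * (y p.1 * y p.2) := by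
    intro x y
    rw [sq]
    simp only [PiLp.inner_apply, RCLike.inner_apply, starRingEnd_apply, star_trivial]
    rw [Finset.sum_mul_sum, ← Finset.sum_product']
    refine Finset.sum_congr rfl fun p _ => by ring
  have hInner : ∀ x : EuclideanSpace ℝ (Fin N),
      ∫ y, ⟪x, y⟫ ^ 2 ∂μ = ∑ p : Fin N × Fin N, (x p.1 * x p.2) * m p.1 p.2 := by
    intro x
    simp_rw [hexp x]
    rw [integral_finset_sum _ (fun p _ => (hint p.1 p.2).const_mul _)]
    exact Finset.sum_congr rfl fun p _ => integral_const_mul _ _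
  have hintInner : Integrable (fun x : EuclideanSpace ℝ (Fin N) =>
      ∑ p : Fin N × Fin N, (x p.1 * x p.2) * m p.1 p.2) μ :=
    integrable_finset_sum _ (fun p _ => (hint p.1 p.2).mul_const _)
  have hP : ∫ x, ∫ y, ⟪x, y⟫ ^ 2 ∂μ ∂μ = ∑ p : Fin N × Fin N, m p.1 p.2 ^ 2 := by
    simp_rw [hInner]
    rw [integral_finset_sum _ (fun p _ => (hint p.1 p.2).mul_const _)]
    exact Finset.sum_congr rfl fun p _ => by
      rw [integral_mul_const, sq]
  set T : ℝ := ∑ i, m i i with hTdef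
  set P : ℝ := ∑ p : Fin N × Fin N, m p.1 p.2 ^ 2 with hPdef
  have hdiag : ∑ i, m i i ^ 2 ≤ P := by
    rw [hPdef, Fintype.sum_prod_type]
    refine Finset.sum_le_sum fun i _ => ?_
    exact Finset.single_le_sum (f := fun j => m i j ^ 2) (fun j _ => sq_nonneg _)
      (Finset.mem_univ i)
  have hCS : T ^ 2 ≤ (N : ℝ) * ∑ i, m i i ^ 2 := by
    have := Finset.sum_mul_sq_le_sq_mul_sq Finset.univ (fun i => m i i) (fun _ => (1:ℝ))
    simp only [mul_one, one_pow, Finset.sum_const, Finset.card_univ, Fintype.card_fin,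
      nsmul_eq_mul] at this
    calc T ^ 2 ≤ (∑ i, m i i ^ 2) * ((N : ℝ) * 1) := by simpa using this
    _ = (N : ℝ) * ∑ i, m i i ^ 2 := by ring
  have hmain : (1 / (N : ℝ)) * T ^ 2 ≤ P := by
    rw [one_div, inv_mul_le_iff₀ hN0]
    calc T ^ 2 ≤ (N : ℝ) * ∑ i, m i i ^ 2 := hCS
    _ ≤ (N : ℝ) * P := by nlinarith [hdiag]
  constructor
  · rw [hT, hP]; exact hmain
  intro hne
  -- positivity of T
  have hTpos : 0 < T := by
    rcases lt_or_eq_of_le (le_trans (integral_nonneg fun x => sq_nonneg ‖x‖)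
        (le_of_eq hT)) with h | h
    · exact h
    · exfalso
      apply hne
      have h0 : ∫ x, ‖x‖ ^ 2 ∂μ = 0 := by rw [hT, ← h]
      have hae : ∀ᵐ x ∂μ, ‖x‖ ^ 2 = 0 := by
        have := (integral_eq_zero_iff_of_nonneg (fun x => sq_nonneg ‖x‖) hmom).mp h0
        filter_upwards [this.le] with x hx using le_antisymm hx (sq_nonneg _)
      have hae0 : (id : EuclideanSpace ℝ (Fin N) → _) =ᵐ[μ] fun _ => (0 : EuclideanSpace ℝ (Fin N)) := by
        filter_upwards [hae] with x hx
        have h1 : ‖x‖ = 0 := by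
          have := pow_eq_zero_iff (n := 2) (by norm_num) |>.mp hx
          exact this
        show x = 0
        exact norm_eq_zero.mp h1
      calc μ = μ.map id := (Measure.map_id).symm
      _ = μ.map (fun _ => (0 : EuclideanSpace ℝ (Fin N))) := Measure.map_congr hae0
      _ = Measure.dirac 0 := by
        rw [Measure.map_const]; simp
  refine ⟨fun heq => ?_, fun ⟨A, hA, hfr⟩ => ?_⟩
  · -- equality → tight
    rw [hT, hP] at heq
    have hde : ∑ i, m i i ^ 2 = (1 / (N : ℝ)) * T ^ 2 := by
      have h1 : (1 / (N : ℝ)) * T ^ 2 ≤ ∑ i, m i i ^ 2 := by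
        rw [one_div, inv_mul_le_iff₀ hN0]; linarith [hCS]
      have h2 : ∑ i, m i i ^ 2 ≤ (1 / (N : ℝ)) * T ^ 2 := heq ▸ hdiag
      linarith
    set c : ℝ := T / N with hc
    have hcpos : 0 < c := div_pos hTpos hN0
    have hdiagc : ∀ i, m i i = c := by
      have hS : ∑ i, (m i i - c) ^ 2 = 0 := by
        have : ∑ i, (m i i - c) ^ 2
            = ∑ i, m i i ^ 2 - 2 * c * T + N * c ^ 2 := by
          have h1 : ∀ i : Fin N, (m i i - c) ^ 2
              = m i i ^ 2 - 2 * c * m i i + c ^ 2 := fun i => by ring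
          simp_rw [h1]
          rw [Finset.sum_add_distrib, Finset.sum_sub_distrib, ← Finset.mul_sum,
            Finset.sum_const, Finset.card_univ, Fintype.card_fin, nsmul_eq_mul, ← hTdef]
        rw [this, hde, hc]
        field_simp
        ring
      intro i
      have := (Finset.sum_eq_zero_iff_of_nonneg (fun j _ => sq_nonneg (m j j - c))).mp hS
        i (Finset.mem_univ i)
      have := pow_eq_zero_iff (n := 2) (by norm_num) |>.mp this
      linarith [sub_eq_zero.mp this]
    have hoff : ∀ i j, i ≠ j → m i j = 0 := by
      have hPdiag : P = ∑ i, m i i ^ 2 := by rw [heq, hde]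
      have hsplit : ∑ i, ∑ j, m i j ^ 2 = P := by
        rw [hPdef, Fintype.sum_prod_type]
      have hzero : ∑ i, (∑ j, m i j ^ 2 - m i i ^ 2) = 0 := by
        rw [Finset.sum_sub_distrib, hsplit, hPdiag, sub_self]
      have hrow : ∀ i, ∑ j, m i j ^ 2 - m i i ^ 2 = 0 := by
        intro i
        refine (Finset.sum_eq_zero_iff_of_nonneg fun i _ => ?_).mp hzero i (Finset.mem_univ i)
        have : m i i ^ 2 ≤ ∑ j, m i j ^ 2 :=
          Finset.single_le_sum (f := fun j => m i j ^ 2) (fun j _ => sq_nonneg _)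
            (Finset.mem_univ i)
        linarith
      intro i j hij
      have h1 : ∑ j, m i j ^ 2 = m i i ^ 2 := by linarith [hrow i]
      have h2 : ∑ j' ∈ Finset.univ.erase i, m i j' ^ 2 = 0 := by
        rw [Finset.sum_erase_eq_sub (Finset.mem_univ i), h1, sub_self]
      have := (Finset.sum_eq_zero_iff_of_nonneg fun j' _ => sq_nonneg (m i j')).mp h2 j
        (Finset.mem_erase.mpr ⟨hij.symm, Finset.mem_univ j⟩)
      exact pow_eq_zero_iff (n := 2) (by norm_num) |>.mp this
    refine ⟨c, hcpos, fun x => ?_⟩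
    rw [hInner x, Fintype.sum_prod_type]
    have : ∀ i : Fin N, ∑ j, (x i * x j) * m i j = x i * x i * c := by
      intro i
      rw [Finset.sum_eq_single i]
      · rw [hdiagc i]
      · intro j _ hji; rw [hoff i j (fun h => hji h.symm), mul_zero]
      · intro h; exact absurd (Finset.mem_univ i) h
    simp_rw [this, ← Finset.sum_mul, ← hnorm]
    ring
  · -- tight → equality
    have hdiagA : ∀ i, m i i = A := by
      intro i
      have := hfr (EuclideanSpace.single i (1:ℝ))
      simp only [EuclideanSpace.norm_single, norm_one, one_pow, mul_one] at this
      rw [← this]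
      refine integral_congr_ae (Filter.Eventually.of_forall fun y => ?_)
      show y i * y i = (⟪EuclideanSpace.single i (1:ℝ), y⟫ : ℝ) ^ 2
      rw [EuclideanSpace.inner_single_left]
      norm_num [sq]
    have hTA : T = N * A := by
      rw [hTdef]
      simp [hdiagA, Finset.sum_const, Finset.card_univ, mul_comm]
    have hPA : ∫ x, ∫ y, ⟪x, y⟫ ^ 2 ∂μ ∂μ = A * T := by
      simp_rw [hfr]
      rw [integral_const_mul, hT]
    rw [hPA, hT, hTA]
    field_simp
end

section
/- The probabilistic frame potential equals the sum of squares of the eigenvalues of the frame operator: for μ a probability measure on ℝ^N with finite second moment, ∬ ⟨x,y⟩² dμ(x) dμ(y) = Σ_{k=1}^N λ_k², where λ_1,…,λ_N are the eigenvalues of S_μ (equivalently, PFP(μ) equals the squared Frobenius norm of the second-moment matrix of μ). -/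
open MeasureTheory
open scoped RealInnerProductSpace

theorem stmt17 {N : ℕ} (μ : Measure (EuclideanSpace ℝ (Fin N)))
    [IsProbabilityMeasure μ]
    (hmom : Integrable (fun y : EuclideanSpace ℝ (Fin N) => ‖y‖ ^ 2) μ)
    (S : Matrix (Fin N) (Fin N) ℝ)
    (hS : ∀ i j, S i j = ∫ x, x i * x j ∂μ)
    (hSherm : S.IsHermitian) :
    ∫ x, ∫ y, ⟪x, y⟫ ^ 2 ∂μ ∂μ = ∑ k, hSherm.eigenvalues k ^ 2 ∧
    ∫ x, ∫ y, ⟪x, y⟫ ^ 2 ∂μ ∂μ = ∑ i, ∑ j, S i j ^ 2 := by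
  have hsymm : ∀ i j, S j i = S i j := by
    intro i j
    have := congrFun (congrFun hSherm.eq j) i
    simpa [Matrix.conjTranspose_apply] using this.symm
  -- integrability of coordinate products
  have hint : ∀ i j : Fin N, Integrable (fun y : EuclideanSpace ℝ (Fin N) => y i * y j) μ := by
    intro i j
    have hcoord : ∀ (y : EuclideanSpace ℝ (Fin N)) (k : Fin N), |y k| ≤ ‖y‖ := by
      intro y k
      rw [EuclideanSpace.norm_eq]
      rw [show |y k| = Real.sqrt (‖y k‖ ^ 2) by
        rw [Real.sqrt_sq_eq_abs]; simp [abs_abs]]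
      apply Real.sqrt_le_sqrt
      exact Finset.single_le_sum (f := fun k => ‖y k‖ ^ 2)
        (fun k _ => by positivity) (Finset.mem_univ k)
    refine hmom.mono ?_ ?_
    · exact (by fun_prop : Continuous fun y : EuclideanSpace ℝ (Fin N) => y i * y j).aestronglyMeasurable
    · filter_upwards with y
      have h1 := hcoord y i
      have h2 := hcoord y j
      calc ‖y i * y j‖ = |y i| * |y j| := by simp [abs_mul]
        _ ≤ ‖y‖ * ‖y‖ := by
            exact mul_le_mul h1 h2 (abs_nonneg _) (norm_nonneg _)
        _ = ‖(‖y‖ ^ 2)‖ := by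
            rw [Real.norm_of_nonneg (by positivity)]; ring
  -- inner integral
  have hinner : ∀ x : EuclideanSpace ℝ (Fin N),
      ∫ y, ⟪x, y⟫ ^ 2 ∂μ = ∑ i, ∑ j, x i * x j * S i j := by
    intro x
    have hexp : ∀ y : EuclideanSpace ℝ (Fin N),
        ⟪x, y⟫ ^ 2 = ∑ i, ∑ j, x i * x j * (y i * y j) := by
      intro y
      rw [PiLp.inner_apply]
      simp only [RCLike.inner_apply, conj_trivial, sq, Finset.sum_mul_sum]
      exact Finset.sum_congr rfl fun i _ => Finset.sum_congr rfl fun j _ => by ring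
    simp only [hexp]
    rw [integral_finset_sum]
    · refine Finset.sum_congr rfl fun i _ => ?_
      rw [integral_finset_sum]
      · refine Finset.sum_congr rfl fun j _ => ?_
        rw [integral_const_mul, hS i j]
      · exact fun j _ => (hint i j).const_mul _
    · exact fun i _ => integrable_finset_sum _ fun j _ => (hint i j).const_mul _
  -- outer integral
  have houter : ∫ x, ∫ y, ⟪x, y⟫ ^ 2 ∂μ ∂μ = ∑ i, ∑ j, S i j ^ 2 := by
    simp only [hinner]
    rw [integral_finset_sum]
    · refine Finset.sum_congr rfl fun i _ => ?_
      rw [integral_finset_sum]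
      · refine Finset.sum_congr rfl fun j _ => ?_
        rw [integral_mul_const, ← hS i j, sq]
      · exact fun j _ => (hint i j).mul_const _
    · exact fun i _ => integrable_finset_sum _ fun j _ => (hint i j).mul_const _
  refine ⟨?_, houter⟩
  rw [houter]
  -- trace (S * S) two ways
  have htr1 : (S * S).trace = ∑ i, ∑ j, S i j ^ 2 := by
    simp only [Matrix.trace, Matrix.diag, Matrix.mul_apply]
    refine Finset.sum_congr rfl fun i _ => Finset.sum_congr rfl fun j _ => ?_
    rw [hsymm i j, sq]
  have htr2 : (S * S).trace = ∑ k, hSherm.eigenvalues k ^ 2 := by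
    conv_lhs => rw [hSherm.spectral_theorem]
    rw [Unitary.conjStarAlgAut_apply]
    set U : Matrix (Fin N) (Fin N) ℝ := (Matrix.IsHermitian.eigenvectorUnitary hSherm : Matrix (Fin N) (Fin N) ℝ)
    set D : Matrix (Fin N) (Fin N) ℝ := Matrix.diagonal (RCLike.ofReal ∘ hSherm.eigenvalues)
    have hustar : star U * U = 1 := Matrix.mem_unitaryGroup_iff'.mp
      (Matrix.IsHermitian.eigenvectorUnitary hSherm).2
    have : U * D * star U * (U * D * star U) = U * (D * D) * star U := by
      calc U * D * star U * (U * D * star U)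
          = U * D * (star U * U) * D * star U := by
            simp only [Matrix.mul_assoc]
        _ = U * (D * D) * star U := by rw [hustar]; simp only [Matrix.mul_one, Matrix.mul_assoc]
    rw [this, Matrix.trace_mul_cycle, ← Matrix.mul_assoc, hustar, Matrix.one_mul]
    simp [D, Matrix.diagonal_mul_diagonal, Matrix.trace_diagonal, sq]
  rw [← htr1, htr2]
end

section
/- If μ is a probability measure on ℝ^N with ∫ ‖x‖² dμ(x) = 1, then PFP(μ) ≥ 1/n, where n is the number of nonzero eigenvalues of the frame operator S_μ; equality holds if and only if the nonzero eigenvalues of S_μ are all equal to 1/n. -/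
open MeasureTheory
open scoped RealInnerProductSpace

private lemma trace_eq_sum_eigenvalues {n : ℕ} (A : Matrix (Fin n) (Fin n) ℝ)
    (hA : A.IsHermitian) : A.trace = ∑ i, hA.eigenvalues i := by
  conv_lhs => rw [hA.spectral_theorem, Unitary.conjStarAlgAut_apply]
  rw [Matrix.trace_mul_cycle]
  simp [Matrix.trace_diagonal]

private lemma trace_sq_eq_sum_sq {n : ℕ} (A : Matrix (Fin n) (Fin n) ℝ)
    (hA : A.IsHermitian) : (A * A).trace = ∑ i, hA.eigenvalues i ^ 2 := by
  conv_lhs => rw [hA.spectral_theorem, Unitary.conjStarAlgAut_apply]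
  rw [show ∀ U D V : Matrix (Fin n) (Fin n) ℝ, (U*D*V)*(U*D*V) = U*(D*(V*U)*D)*V by
    intros; noncomm_ring]
  have h1 : (star (hA.eigenvectorUnitary : Matrix (Fin n) (Fin n) ℝ)) *
      (hA.eigenvectorUnitary : Matrix (Fin n) (Fin n) ℝ) = 1 :=
    Unitary.coe_star_mul_self _
  rw [h1, Matrix.mul_one, Matrix.trace_mul_cycle, ← Matrix.mul_assoc, h1, Matrix.one_mul,
    Matrix.diagonal_mul_diagonal, Matrix.trace_diagonal]
  simp [sq]

theorem stmt18 {N : ℕ} (μ : Measure (EuclideanSpace ℝ (Fin N)))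
    [IsProbabilityMeasure μ]
    (hmom : Integrable (fun y : EuclideanSpace ℝ (Fin N) => ‖y‖ ^ 2) μ)
    (hnorm : ∫ x, ‖x‖ ^ 2 ∂μ = 1)
    (S : Matrix (Fin N) (Fin N) ℝ)
    (hS : ∀ i j, S i j = ∫ x, x i * x j ∂μ)
    (hSherm : S.IsHermitian)
    (n : ℕ)
    (hn : n = (Finset.univ.filter (fun k => hSherm.eigenvalues k ≠ 0)).card) :
    (1 / (n : ℝ)) ≤ ∫ x, ∫ y, ⟪x, y⟫ ^ 2 ∂μ ∂μ ∧
    (∫ x, ∫ y, ⟪x, y⟫ ^ 2 ∂μ ∂μ = 1 / (n : ℝ) ↔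
      ∀ k, hSherm.eigenvalues k ≠ 0 → hSherm.eigenvalues k = 1 / (n : ℝ)) := by
  
  -- coordinate bound
  have habs : ∀ (x : EuclideanSpace ℝ (Fin N)) (i : Fin N), |x i| ≤ ‖x‖ := by
    intro x i
    rw [EuclideanSpace.norm_eq, ← Real.sqrt_sq_eq_abs]
    apply Real.sqrt_le_sqrt
    have := Finset.single_le_sum (f := fun k => ‖x k‖ ^ 2)
      (fun k _ => by positivity) (Finset.mem_univ i)
    simpa [Real.norm_eq_abs, sq_abs] using this
  -- integrability of coordinate products
  have hint : ∀ i j : Fin N, Integrable (fun x : EuclideanSpace ℝ (Fin N) => x i * x j) μ := by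
    intro i j
    apply hmom.mono'
    · exact (((EuclideanSpace.proj i : EuclideanSpace ℝ (Fin N) →L[ℝ] ℝ).continuous.mul
        (EuclideanSpace.proj j : EuclideanSpace ℝ (Fin N) →L[ℝ] ℝ).continuous)).aestronglyMeasurable
    · filter_upwards with x
      have : |x i * x j| ≤ ‖x‖ * ‖x‖ := by
        rw [abs_mul]
        exact mul_le_mul (habs x i) (habs x j) (abs_nonneg _) (norm_nonneg _)
      simpa [Real.norm_eq_abs, sq, abs_mul] using this
  -- expansion of the inner product squared
  have hinner : ∀ x y : EuclideanSpace ℝ (Fin N), ⟪x, y⟫ ^ 2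
      = ∑ p : Fin N × Fin N, x p.1 * x p.2 * (y p.1 * y p.2) := by
    intro x y
    have h : ⟪x, y⟫ = ∑ i, x i * y i := by
      simp [PiLp.inner_apply, RCLike.inner_apply, starRingEnd_apply]
      exact Finset.sum_congr rfl fun i _ => mul_comm _ _
    rw [h, sq, Finset.sum_mul_sum, Fintype.sum_prod_type]
    exact Finset.sum_congr rfl fun i _ => Finset.sum_congr rfl fun j _ => by ring
  -- inner integral
  have hinnerInt : ∀ x : EuclideanSpace ℝ (Fin N), (∫ y, ⟪x, y⟫ ^ 2 ∂μ)
      = ∑ p : Fin N × Fin N, x p.1 * x p.2 * S p.1 p.2 := by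
    intro x
    rw [show (fun y : EuclideanSpace ℝ (Fin N) => ⟪x, y⟫ ^ 2)
        = fun y => ∑ p : Fin N × Fin N, x p.1 * x p.2 * (y p.1 * y p.2) from
      funext fun y => hinner x y]
    rw [integral_finset_sum _ (fun p _ => (hint p.1 p.2).const_mul _)]
    exact Finset.sum_congr rfl fun p _ => by
      rw [integral_const_mul, hS p.1 p.2]
  -- full double integral
  have key : (∫ x, ∫ y, ⟪x, y⟫ ^ 2 ∂μ ∂μ) = ∑ k, hSherm.eigenvalues k ^ 2 := by
    rw [show (fun x : EuclideanSpace ℝ (Fin N) => ∫ y, ⟪x, y⟫ ^ 2 ∂μ)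
        = fun x => ∑ p : Fin N × Fin N, x p.1 * x p.2 * S p.1 p.2 from
      funext hinnerInt]
    rw [integral_finset_sum _ (fun p _ => (hint p.1 p.2).mul_const _)]
    have : ∑ p : Fin N × Fin N, (∫ x : EuclideanSpace ℝ (Fin N), x p.1 * x p.2 * S p.1 p.2 ∂μ)
        = ∑ p : Fin N × Fin N, S p.1 p.2 * S p.1 p.2 := by
      refine Finset.sum_congr rfl fun p _ => ?_
      rw [integral_mul_const, hS p.1 p.2]
    rw [this, ← trace_sq_eq_sum_sq S hSherm]
    have hsymm : ∀ i j, S j i = S i j := by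
      intro i j
      have := hSherm.apply i j
      simpa using this
    simp only [Matrix.trace, Matrix.diag, Matrix.mul_apply, Fintype.sum_prod_type]
    exact Finset.sum_congr rfl fun i _ => Finset.sum_congr rfl fun j _ => by
      rw [hsymm i j]
  -- trace = 1
  have htr : ∑ k, hSherm.eigenvalues k = 1 := by
    rw [← trace_eq_sum_eigenvalues S hSherm]
    have hnc : ∀ x : EuclideanSpace ℝ (Fin N), ‖x‖ ^ 2 = ∑ i, x i * x i := by
      intro x
      rw [← real_inner_self_eq_norm_sq]
      simp [PiLp.inner_apply, RCLike.inner_apply, starRingEnd_apply]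
      rw [EuclideanSpace.norm_sq_eq]
      exact Finset.sum_congr rfl fun i _ => by rw [Real.norm_eq_abs, sq_abs, sq]
    have : S.trace = ∫ x, ∑ i, (x : EuclideanSpace ℝ (Fin N)) i * x i ∂μ := by
      rw [integral_finset_sum _ (fun i _ => hint i i)]
      simp only [Matrix.trace, Matrix.diag]
      exact Finset.sum_congr rfl fun i _ => hS i i
    rw [this, show (fun x : EuclideanSpace ℝ (Fin N) => ∑ i, x i * x i) = fun x => ‖x‖ ^ 2 from
      funext fun x => (hnc x).symm, hnorm]
  -- scalar part
  set lam := hSherm.eigenvalues with hlam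
  set T := Finset.univ.filter (fun k => lam k ≠ 0) with hT
  have hsum1 : ∑ k ∈ T, lam k = 1 := by
    rw [hT, Finset.sum_filter_ne_zero, htr]
  have hsum2 : ∑ k ∈ T, lam k ^ 2 = ∑ k, lam k ^ 2 := by
    rw [hT]
    apply Finset.sum_filter_of_ne
    intro k _ h hk
    exact h (by rw [hk]; ring)
  have hnpos : 0 < (n : ℝ) := by
    have : n ≠ 0 := by
      intro h0
      rw [h0] at hn
      have : T = ∅ := Finset.card_eq_zero.mp hn.symm
      rw [this] at hsum1
      simp at hsum1
    positivity
  have hcard : (T.card : ℝ) = n := by rw [hn]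
  have hident : ∑ k ∈ T, (lam k - 1 / n) ^ 2
      = (∑ k, lam k ^ 2) - 1 / n := by
    have : ∀ k ∈ T, (lam k - 1 / n) ^ 2
        = lam k ^ 2 - (2 / n) * lam k + (1 / n) ^ 2 := fun k _ => by ring
    rw [Finset.sum_congr rfl this, Finset.sum_add_distrib, Finset.sum_sub_distrib,
      ← Finset.mul_sum, hsum1, hsum2, Finset.sum_const, nsmul_eq_mul, hcard]
    field_simp
    ring
  have hnonneg : 0 ≤ ∑ k ∈ T, (lam k - 1 / n) ^ 2 :=
    Finset.sum_nonneg fun k _ => sq_nonneg _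
  constructor
  · rw [key]
    linarith [hident ▸ hnonneg]
  · rw [key]
    constructor
    · intro heq k hk
      have hz : ∑ k ∈ T, (lam k - 1 / n) ^ 2 = 0 := by rw [hident, heq]; ring
      have := (Finset.sum_eq_zero_iff_of_nonneg (fun k _ => sq_nonneg (lam k - 1 / n))).mp hz
        k (by simp [hT, hk])
      have : lam k - 1 / n = 0 := by
        have h := this
        nlinarith [sq_nonneg (lam k - 1 / n)]
      linarith
    · intro hall
      have hz : ∑ k ∈ T, (lam k - 1 / n) ^ 2 = 0 := by
        apply Finset.sum_eq_zero
        intro k hk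
        have : lam k ≠ 0 := by simpa [hT] using hk
        rw [hall k this]
        ring
      linarith [hident ▸ hz]
end

section
/- If μ is a tight probabilistic frame on ℝ^N, then the map F from Borel sets of ℝ^N to N×N real matrices defined by F(A) = (N / M₂²(μ)) · (∫_A y_i y_j dμ(y))_{i,j} is a positive operator valued measure: each F(A) is positive semidefinite, F(ℝ^N) is the identity matrix, and F is countably additive in the weak sense on pairwise disjoint Borel sets. -/
open MeasureTheory Matrix
open scoped RealInnerProductSpace

theorem stmt19 {N : ℕ} (hN : 0 < N) (μ : Measure (EuclideanSpace ℝ (Fin N)))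
    [IsProbabilityMeasure μ]
    (hmom : Integrable (fun y : EuclideanSpace ℝ (Fin N) => ‖y‖ ^ 2) μ)
    (A : ℝ) (hA : 0 < A)
    (htight : ∀ x : EuclideanSpace ℝ (Fin N), ∫ y, ⟪x, y⟫ ^ 2 ∂μ = A * ‖x‖ ^ 2)
    (F : Set (EuclideanSpace ℝ (Fin N)) → Matrix (Fin N) (Fin N) ℝ)
    (hF : ∀ s, F s = ((N : ℝ) / ∫ y, ‖y‖ ^ 2 ∂μ) •
      Matrix.of (fun i j => ∫ y in s, y i * y j ∂μ)) :
    (∀ s : Set (EuclideanSpace ℝ (Fin N)), MeasurableSet s → (F s).PosSemidef) ∧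
    (F Set.univ = 1) ∧
    (∀ (s : ℕ → Set (EuclideanSpace ℝ (Fin N))),
      (∀ i, MeasurableSet (s i)) → Pairwise (Function.onFun Disjoint s) →
      ∀ x y : Fin N → ℝ,
        HasSum (fun i => y ⬝ᵥ (F (s i)).mulVec x)
          (y ⬝ᵥ (F (⋃ i, s i)).mulVec x)) := by
  set c : ℝ := (N : ℝ) / ∫ y, ‖y‖ ^ 2 ∂μ with hc
  -- basic integrability
  have hint : ∀ a b : EuclideanSpace ℝ (Fin N),
      Integrable (fun w => ⟪a, w⟫ * ⟪b, w⟫) μ := by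
    intro a b
    refine (hmom.const_mul (‖a‖ * ‖b‖)).mono
      (((continuous_const.inner continuous_id).mul
        (continuous_const.inner continuous_id)).aestronglyMeasurable) ?_
    filter_upwards with w
    have h1 := abs_real_inner_le_norm a w
    have h2 := abs_real_inner_le_norm b w
    simp only [Real.norm_eq_abs]
    calc |⟪a, w⟫ * ⟪b, w⟫| ≤ (‖a‖ * ‖w‖) * (‖b‖ * ‖w‖) := by
          rw [abs_mul]; exact mul_le_mul h1 h2 (abs_nonneg _) (by positivity)
      _ = ‖a‖ * ‖b‖ * ‖w‖ ^ 2 := by ring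
      _ ≤ |‖a‖ * ‖b‖ * ‖w‖ ^ 2| := le_abs_self _
  have hsingle : ∀ (i : Fin N) (w : EuclideanSpace ℝ (Fin N)),
      ⟪EuclideanSpace.single i (1 : ℝ), w⟫ = w i := by
    intro i w; simp [EuclideanSpace.inner_single_left]
  have hintij : ∀ i j : Fin N,
      Integrable (fun w : EuclideanSpace ℝ (Fin N) => w i * w j) μ := by
    intro i j
    simpa [hsingle] using hint (EuclideanSpace.single i 1) (EuclideanSpace.single j 1)
  have hint2 : ∀ x y : Fin N → ℝ,
      Integrable (fun w : EuclideanSpace ℝ (Fin N) =>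
        (∑ i, x i * w i) * (∑ j, y j * w j)) μ := by
    intro x y
    simpa [PiLp.inner_apply, RCLike.inner_apply, mul_comm] using
      hint ((WithLp.equiv 2 _).symm x) ((WithLp.equiv 2 _).symm y)
  -- second moments
  have mii : ∀ i, ∫ w, w i * w i ∂μ = A := by
    intro i
    have h := htight (EuclideanSpace.single i 1)
    simpa [hsingle, EuclideanSpace.norm_single, sq] using h
  have mij : ∀ i j : Fin N, i ≠ j → ∫ w, w i * w j ∂μ = 0 := by
    intro i j hij
    have h := htight (EuclideanSpace.single i 1 + EuclideanSpace.single j 1)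
    have hn : ‖EuclideanSpace.single i (1:ℝ) + EuclideanSpace.single j 1‖ ^ 2 = 2 := by
      rw [norm_add_sq_real]
      simp [EuclideanSpace.norm_single, EuclideanSpace.inner_single_left,
        EuclideanSpace.single_apply, hij.symm]
      norm_num
    rw [hn] at h
    have he : ∀ w : EuclideanSpace ℝ (Fin N),
        ⟪EuclideanSpace.single i (1:ℝ) + EuclideanSpace.single j 1, w⟫ ^ 2
          = (w i * w i + w j * w j) + 2 * (w i * w j) := by
      intro w; rw [inner_add_left, hsingle, hsingle]; ring
    rw [show (fun w : EuclideanSpace ℝ (Fin N) =>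
        ⟪EuclideanSpace.single i (1:ℝ) + EuclideanSpace.single j 1, w⟫ ^ 2) =
        fun w => (w i * w i + w j * w j) + 2 * (w i * w j) from funext he] at h
    have hI1 : Integrable (fun w : EuclideanSpace ℝ (Fin N) => w i * w i + w j * w j) μ :=
      (hintij i i).add (hintij j j)
    have hI2 : Integrable (fun w : EuclideanSpace ℝ (Fin N) => 2 * (w i * w j)) μ :=
      (hintij i j).const_mul 2
    rw [integral_add hI1 hI2, integral_add (hintij i i) (hintij j j),
      integral_const_mul, mii i, mii j] at h
    linarith
  have moment : ∀ i j : Fin N, ∫ w, w i * w j ∂μ = if i = j then A else 0 := by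
    intro i j
    by_cases hij : i = j
    · subst hij; simp [mii i]
    · simp [hij, mij i j hij]
  -- total second moment
  have htot : (∫ w, ‖w‖ ^ 2 ∂μ) = N * A := by
    have hn : ∀ w : EuclideanSpace ℝ (Fin N), ‖w‖ ^ 2 = ∑ i, w i * w i := by
      intro w
      rw [EuclideanSpace.norm_eq, Real.sq_sqrt (by positivity)]
      simp [sq]
    rw [show (fun w : EuclideanSpace ℝ (Fin N) => ‖w‖ ^ 2) =
        fun w => ∑ i, w i * w i from funext hn,
      integral_finset_sum _ fun i _ => hintij i i]
    simp [mii]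
  have hNA : (0:ℝ) < (N:ℝ) * A := mul_pos (Nat.cast_pos.mpr hN) hA
  have hcA : c * A = 1 := by
    rw [hc, htot]
    field_simp
  have hcpos : 0 < c := by
    rw [hc, htot]
    exact div_pos (Nat.cast_pos.mpr hN) hNA
  -- set integral expansion
  have keyInt : ∀ (s : Set (EuclideanSpace ℝ (Fin N))) (x y : Fin N → ℝ),
      ∫ w in s, (∑ i, y i * w i) * (∑ j, x j * w j) ∂μ
        = ∑ i, ∑ j, y i * x j * ∫ w in s, w i * w j ∂μ := by
    intro s x y
    have he : ∀ w : EuclideanSpace ℝ (Fin N),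
        (∑ i, y i * w i) * (∑ j, x j * w j)
          = ∑ i, ∑ j, y i * x j * (w i * w j) := by
      intro w
      rw [Finset.sum_mul_sum]
      exact Finset.sum_congr rfl fun i _ => Finset.sum_congr rfl fun j _ => by ring
    simp_rw [he]
    rw [integral_finset_sum _ fun i _ => integrable_finset_sum _ fun j _ =>
      ((hintij i j).const_mul _).integrableOn]
    refine Finset.sum_congr rfl fun i _ => ?_
    rw [integral_finset_sum _ fun j _ => ((hintij i j).const_mul _).integrableOn]
    exact Finset.sum_congr rfl fun j _ => integral_const_mul _ _
  -- bilinear form formula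
  have key : ∀ (s : Set (EuclideanSpace ℝ (Fin N))) (x y : Fin N → ℝ),
      y ⬝ᵥ (F s).mulVec x
        = c * ∫ w in s, (∑ i, y i * w i) * (∑ j, x j * w j) ∂μ := by
    intro s x y
    rw [keyInt s x y, hF]
    simp only [dotProduct, mulVec, Matrix.smul_apply, Matrix.of_apply, smul_eq_mul,
      Finset.mul_sum]
    exact Finset.sum_congr rfl fun i _ => Finset.sum_congr rfl fun j _ => by ring
  refine ⟨?_, ?_, ?_⟩
  · -- PosSemidef
    intro s hs
    rw [posSemidef_iff_dotProduct_mulVec]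
    constructor
    · ext i j
      simp only [hF, conjTranspose_apply, Matrix.smul_apply, Matrix.of_apply,
        smul_eq_mul, star_trivial]
      congr 1
      exact integral_congr_ae (Filter.Eventually.of_forall fun w => mul_comm _ _)
    · intro x
      have hx : star x = x := by simp
      rw [hx, key s x x]
      have : (0:ℝ) ≤ ∫ w in s, (∑ i, x i * w i) * (∑ j, x j * w j) ∂μ :=
        integral_nonneg fun w => mul_self_nonneg _
      positivity
  · -- identity
    ext i j
    rw [hF]
    simp only [Matrix.smul_apply, Matrix.of_apply, smul_eq_mul, Measure.restrict_univ]
    rw [moment i j, Matrix.one_apply]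
    by_cases hij : i = j
    · simp [hij, hcA]
    · simp [hij]
  · -- countable additivity
    intro s hmeas hdisj x y
    simp_rw [key]
    exact ((hasSum_integral_iUnion hmeas hdisj
      (hint2 y x).integrableOn).mul_left c)
end
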